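/- arXiv:math/0607686 — 3 statements merged into one kernel-verified Lean document; each statement's English description precedes it below -/
import Mathlib

section
/- There exists a sequence (g_m)_{m≥1} of probability densities on [0,1] with the following two properties: (1) for each fixed i, the M-fold self-convolution g_i ∗ g_i ∗ ··· ∗ g_i (M times, circular convolution) converges in L¹([0,1]) to the constant function 1 as M → ∞; (2) the convolutions h_M = g_1 ∗ g_2 ∗ ··· ∗ g_M do NOT converge in L¹([0,1]) to the constant function 1 as M → ∞. -/
open MeasureTheory Filter

noncomputable section

/-- A probability density on `[0,1]`: nonnegative, integrable, total integral one. -/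
def IsProbDensity (g : ℝ → ℝ) : Prop :=
  (∀ x, 0 ≤ g x) ∧ IntegrableOn g (Set.Icc 0 1) ∧ (∫ x in (0:ℝ)..1, g x) = 1

/-- Circular convolution on `[0,1]` (the argument is taken modulo 1). -/
def circConv (f g : ℝ → ℝ) : ℝ → ℝ :=
  fun x => ∫ y in (0:ℝ)..1, f y * g (Int.fract (x - y))

/-- The `n`-th Fourier coefficient of `g ∈ L¹([0,1])`. -/
def fourierCoeff01 (g : ℝ → ℝ) (n : ℤ) : ℂ :=
  ∫ x in (0:ℝ)..1, (g x : ℂ) * Complex.exp (-(2 * Real.pi * Complex.I) * n * x)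


/-- bounded measurable is interval integrable -/
lemma II {f : ℝ → ℝ} {C : ℝ} (hm : Measurable f) (hb : ∀ x, |f x| ≤ C) (a b : ℝ) :
    IntervalIntegrable f volume a b := by
  constructor <;>
  · exact Measure.integrableOn_of_bounded (M := C)
      (ne_of_lt (lt_of_le_of_lt (measure_mono Set.Ioc_subset_Icc_self) measure_Icc_lt_top))
      hm.aestronglyMeasurable
      (Filter.Eventually.of_forall fun x => by simpa using hb x)

lemma per_shift (g : ℝ → ℝ) (c : ℝ) :
    (∫ y in (0:ℝ)..1, g (Int.fract (c - y))) = ∫ z in (0:ℝ)..1, g (Int.fract z) := by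
  have h1 := intervalIntegral.integral_comp_sub_left (a := (0:ℝ)) (b := 1)
      (fun z => g (Int.fract z)) c
  rw [h1]
  have hp : Function.Periodic (fun z => g (Int.fract z)) 1 :=
    (Int.fract_periodic ℝ).comp g
  have h2 := hp.intervalIntegral_add_eq (c - 1) 0
  simpa using h2

lemma per_shift' (g : ℝ → ℝ) (c : ℝ) :
    (∫ y in (0:ℝ)..1, g (Int.fract (y + c))) = ∫ z in (0:ℝ)..1, g (Int.fract z) := by
  have h1 := intervalIntegral.integral_comp_add_right (a := (0:ℝ)) (b := 1)
      (fun z => g (Int.fract z)) c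
  rw [h1]
  have hp : Function.Periodic (fun z => g (Int.fract z)) 1 :=
    (Int.fract_periodic ℝ).comp g
  have h2 := hp.intervalIntegral_add_eq c 0
  rw [add_comm c 1] at h2
  simpa using h2

lemma fract_int (g : ℝ → ℝ) :
    (∫ z in (0:ℝ)..1, g (Int.fract z)) = ∫ z in (0:ℝ)..1, g z := by
  rw [intervalIntegral.integral_of_le zero_le_one, intervalIntegral.integral_of_le zero_le_one]
  apply setIntegral_congr_ae measurableSet_Ioc
  have h1 : ∀ᵐ (z : ℝ), z ≠ 1 := by
    refine ae_iff.mpr ?_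
    have : {z : ℝ | ¬ z ≠ 1} = {1} := by ext z; simp
    rw [this]; exact Real.volume_singleton
  filter_upwards [h1] with z hz hmem
  rw [Int.fract_eq_self.mpr ⟨le_of_lt hmem.1, lt_of_le_of_ne hmem.2 hz⟩]

/-- key: integral of a periodized shift -/
lemma per_total (g : ℝ → ℝ) (c : ℝ) :
    (∫ y in (0:ℝ)..1, g (Int.fract (c - y))) = ∫ z in (0:ℝ)..1, g z := by
  rw [per_shift, fract_int]

lemma per_total' (g : ℝ → ℝ) (c : ℝ) :
    (∫ y in (0:ℝ)..1, g (Int.fract (y + c))) = ∫ z in (0:ℝ)..1, g z := by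
  rw [per_shift', fract_int]

end

noncomputable section
open MeasureTheory Filter

structure Nice (f : ℝ → ℝ) (C : ℝ) : Prop where
  meas : Measurable f
  nonneg : ∀ x, 0 ≤ f x
  bound : ∀ x, f x ≤ C
  int_one : (∫ x in (0:ℝ)..1, f x) = 1

namespace Nice

lemma abs_le {f C} (h : Nice f C) (x : ℝ) : |f x| ≤ C := by
  rw [abs_of_nonneg (h.nonneg x)]; exact h.bound x

lemma intInt {f C} (h : Nice f C) (a b : ℝ) : IntervalIntegrable f volume a b :=
  II h.meas h.abs_le a b

lemma C_nonneg {f C} (h : Nice f C) : 0 ≤ C := le_trans (h.nonneg 0) (h.bound 0)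

/-- measurability of the 2-variable kernel -/
lemma kermeas {f g : ℝ → ℝ} (hf : Measurable f) (hg : Measurable g) :
    Measurable (fun p : ℝ × ℝ => f p.2 * g (Int.fract (p.1 - p.2))) :=
  (hf.comp measurable_snd).mul
    (hg.comp (measurable_fract.comp (measurable_fst.sub measurable_snd)))

lemma conv {f g C D} (hf : Nice f C) (hg : Nice g D) : Nice (circConv f g) (C * D) := by
  have hker := kermeas hf.meas hg.meas
  have hib : ∀ x : ℝ, IntervalIntegrable (fun y => f y * g (Int.fract (x - y))) volume 0 1 := by
    intro x
    apply II (C := C * D) (hf.meas.mul (hg.meas.comp (measurable_fract.comp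
      (measurable_const.sub measurable_id))))
    intro y
    show |f y * g (Int.fract (x - y))| ≤ C * D
    rw [abs_mul]
    exact mul_le_mul (hf.abs_le y) (hg.abs_le _) (abs_nonneg _) hf.C_nonneg
  constructor
  · -- measurable
    have : circConv f g = fun x => ∫ y in Set.Ioc (0:ℝ) 1,
        f y * g (Int.fract (x - y)) ∂volume := by
      funext x
      rw [circConv, intervalIntegral.integral_of_le zero_le_one]
    rw [this]
    exact (hker.stronglyMeasurable.integral_prod_right').measurable
  · intro x
    exact intervalIntegral.integral_nonneg zero_le_one
      (fun y _ => mul_nonneg (hf.nonneg y) (hg.nonneg _))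
  · intro x
    calc circConv f g x ≤ ∫ y in (0:ℝ)..1, C * D := by
          apply intervalIntegral.integral_mono_on zero_le_one (hib x)
            (intervalIntegrable_const)
          intro y _
          exact mul_le_mul (hf.bound y) (hg.bound _) (hg.nonneg _) hf.C_nonneg
      _ = C * D := by simp
  · -- total integral one, via Fubini
    haveI : IsFiniteMeasure (volume.restrict (Set.Ioc (0:ℝ) 1)) := by
      constructor
      rw [Measure.restrict_apply_univ, Real.volume_Ioc]
      exact ENNReal.ofReal_lt_top
    have hInt : Integrable (Function.uncurry fun x y => f y * g (Int.fract (x - y)))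
        ((volume.restrict (Set.Ioc (0:ℝ) 1)).prod (volume.restrict (Set.Ioc (0:ℝ) 1))) := by
      apply Integrable.mono' (g := fun _ => C * D) (integrable_const _)
        hker.aestronglyMeasurable
      apply Filter.Eventually.of_forall
      intro p
      rw [Real.norm_eq_abs, abs_mul]
      exact mul_le_mul (hf.abs_le _) (hg.abs_le _) (abs_nonneg _) hf.C_nonneg
    have hswap := integral_integral_swap hInt
    rw [intervalIntegral.integral_of_le zero_le_one]
    have : (∫ x in Set.Ioc (0:ℝ) 1, circConv f g x ∂volume)
        = ∫ x in Set.Ioc (0:ℝ) 1, ∫ y in Set.Ioc (0:ℝ) 1,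
            f y * g (Int.fract (x - y)) ∂volume ∂volume := by
      apply setIntegral_congr_fun measurableSet_Ioc
      intro x _
      rw [circConv, intervalIntegral.integral_of_le zero_le_one]
    rw [this, hswap]
    have inner : ∀ y : ℝ, (∫ x in Set.Ioc (0:ℝ) 1, f y * g (Int.fract (x - y)) ∂volume)
        = f y := by
      intro y
      rw [← intervalIntegral.integral_of_le zero_le_one]
      rw [intervalIntegral.integral_const_mul]
      have : (∫ x in (0:ℝ)..1, g (Int.fract (x - y))) = 1 := by
        have := per_total' g (-y)
        simp only [← sub_eq_add_neg] at this
        rw [this, hg.int_one]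
      rw [this, mul_one]
    rw [show (∫ y in Set.Ioc (0:ℝ) 1, ∫ x in Set.Ioc (0:ℝ) 1,
          f y * g (Int.fract (x - y)) ∂volume ∂volume)
        = ∫ y in Set.Ioc (0:ℝ) 1, f y ∂volume from
      setIntegral_congr_fun measurableSet_Ioc fun y _ => inner y]
    rw [← intervalIntegral.integral_of_le zero_le_one, hf.int_one]

end Nice
end

noncomputable section
open MeasureTheory Filter

lemma conv_affine {U u : ℝ → ℝ} {C D : ℝ} (hU : Nice U C) (hu : Nice u D) (a t : ℝ) :
    circConv (fun x => 1 + a * (U x - 1)) (fun x => 1 + t * (u x - 1))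
      = fun x => 1 + (a * t) * (circConv U u x - 1) := by
  funext x
  have hfm : Measurable (fun y : ℝ => u (Int.fract (x - y))) :=
    hu.meas.comp (measurable_fract.comp (measurable_const.sub measurable_id))
  have hfb : ∀ y : ℝ, |u (Int.fract (x - y))| ≤ D := fun y => hu.abs_le _
  have i1 : IntervalIntegrable U volume 0 1 := hU.intInt 0 1
  have i2 : IntervalIntegrable (fun y : ℝ => u (Int.fract (x - y))) volume 0 1 := II hfm hfb 0 1
  have i3 : IntervalIntegrable (fun y : ℝ => U y * u (Int.fract (x - y))) volume 0 1 := by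
    apply II (C := C * D) (hU.meas.mul hfm)
    intro y; rw [Pi.mul_apply, abs_mul]
    exact mul_le_mul (hU.abs_le y) (hu.abs_le _) (abs_nonneg _) hU.C_nonneg
  have key : (∫ y in (0:ℝ)..1, (1 + a * (U y - 1)) * (1 + t * (u (Int.fract (x - y)) - 1)))
      = ((1-a)*(1-t)) * 1 + (a*(1-t)) * (∫ y in (0:ℝ)..1, U y)
        + (t*(1-a)) * (∫ y in (0:ℝ)..1, u (Int.fract (x - y)))
        + (a*t) * (∫ y in (0:ℝ)..1, U y * u (Int.fract (x - y))) := by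
    have e : ∀ y : ℝ, (1 + a * (U y - 1)) * (1 + t * (u (Int.fract (x - y)) - 1))
        = ((1-a)*(1-t)) + (a*(1-t)) * U y + (t*(1-a)) * u (Int.fract (x - y))
          + (a*t) * (U y * u (Int.fract (x - y))) := by
      intro y; ring
    rw [intervalIntegral.integral_congr (g :=
      fun y => ((1-a)*(1-t)) + (a*(1-t)) * U y + (t*(1-a)) * u (Int.fract (x - y))
          + (a*t) * (U y * u (Int.fract (x - y)))) (fun y _ => e y)]
    rw [intervalIntegral.integral_add (((intervalIntegrable_const).add
        (i1.const_mul _)).add (i2.const_mul _)) (i3.const_mul _)]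
    rw [intervalIntegral.integral_add ((intervalIntegrable_const).add
        (i1.const_mul _)) (i2.const_mul _)]
    rw [intervalIntegral.integral_add (intervalIntegrable_const) (i1.const_mul _)]
    simp [intervalIntegral.integral_const_mul]
  have hper : (∫ y in (0:ℝ)..1, u (Int.fract (x - y))) = 1 := by
    rw [per_total u x, hu.int_one]
  simp only [circConv]
  rw [key, hU.int_one, hper]
  ring

lemma conv_support {f g : ℝ → ℝ} {a b : ℝ} (hb : 0 ≤ b)
    (hf : ∀ y, a < y → y ≤ 1 → f y = 0) (hg : ∀ z, z ∉ Set.Ioc 0 b → g z = 0) :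
    ∀ x, a + b < x → x ≤ 1 → circConv f g x = 0 := by
  intro x hx1 hx2
  rw [circConv, intervalIntegral.integral_of_le zero_le_one]
  have hz : ∀ y ∈ Set.Ioc (0:ℝ) 1, f y * g (Int.fract (x - y)) = (fun _ => (0:ℝ)) y := by
    intro y hy
    by_cases hya : a < y
    · simp [hf y hya hy.2]
    · push_neg at hya
      have h1 : Int.fract (x - y) = x - y := by
        apply Int.fract_eq_self.mpr
        constructor
        · have : b < x - y := by nlinarith [hy.1]
          linarith
        · have : 0 < y := hy.1
          linarith
      rw [h1]
      have : x - y ∉ Set.Ioc 0 b := by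
        simp only [Set.mem_Ioc, not_and, not_le]
        intro _
        nlinarith [hy.1]
      simp [hg _ this]
  rw [setIntegral_congr_fun measurableSet_Ioc hz]
  simp

end

noncomputable section
open MeasureTheory Filter

def eps (m : ℕ) : ℝ := 1 / 2 ^ (m + 1)

def phi (m : ℕ) : ℝ → ℝ := Set.indicator (Set.Ioc 0 (eps m)) (fun _ => (2:ℝ) ^ (m + 1))

def tp (m : ℕ) : ℝ := 1 - 1 / 2 ^ (m + 2)

lemma eps_pos (m : ℕ) : 0 < eps m := by rw [eps]; positivity

lemma eps_le_one (m : ℕ) : eps m ≤ 1 := by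
  rw [eps]
  rw [div_le_one (by positivity)]
  exact one_le_pow₀ (by norm_num)

lemma tp_nonneg (m : ℕ) : 0 ≤ tp m := by
  rw [tp]; simp only [sub_nonneg]
  rw [div_le_one (by positivity)]
  exact one_le_pow₀ (by norm_num)

lemma tp_lt_one (m : ℕ) : tp m < 1 := by
  have : (0:ℝ) < 1 / 2 ^ (m + 2) := by positivity
  rw [tp]; linarith

lemma phi_supp (m : ℕ) : ∀ z, z ∉ Set.Ioc 0 (eps m) → phi m z = 0 := by
  intro z hz; exact Set.indicator_of_notMem hz _

lemma nice_phi (m : ℕ) : Nice (phi m) (2 ^ (m + 1)) := by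
  refine ⟨?_, ?_, ?_, ?_⟩
  · exact Measurable.indicator measurable_const measurableSet_Ioc
  · intro x
    exact Set.indicator_nonneg (fun _ _ => by positivity) x
  · intro x
    rw [phi, Set.indicator_apply]
    split <;> [exact le_refl _; positivity]
  · rw [intervalIntegral.integral_of_le zero_le_one, phi]
    rw [setIntegral_indicator measurableSet_Ioc]
    have : Set.Ioc (0:ℝ) 1 ∩ Set.Ioc 0 (eps m) = Set.Ioc 0 (eps m) := by
      rw [Set.inter_eq_right]
      exact Set.Ioc_subset_Ioc le_rfl (eps_le_one m)
    rw [this, setIntegral_const, measureReal_def, Real.volume_Ioc, smul_eq_mul]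
    rw [ENNReal.toReal_ofReal (by linarith [eps_pos m])]
    rw [eps, sub_zero]
    field_simp

lemma nice_affine {U : ℝ → ℝ} {C : ℝ} (hU : Nice U C) {t : ℝ} (h0 : 0 ≤ t) (h1 : t ≤ 1) :
    Nice (fun x => 1 + t * (U x - 1)) (1 + C) := by
  refine ⟨measurable_const.add ((hU.meas.sub measurable_const).const_mul t), ?_, ?_, ?_⟩
  · intro x; nlinarith [hU.nonneg x]
  · intro x; nlinarith [hU.nonneg x, hU.bound x]
  · rw [intervalIntegral.integral_add intervalIntegrable_const
      (((hU.intInt 0 1).sub intervalIntegrable_const).const_mul t)]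
    rw [intervalIntegral.integral_const_mul,
      intervalIntegral.integral_sub (hU.intInt 0 1) intervalIntegrable_const, hU.int_one]
    simp

lemma nice_isProbDensity {f : ℝ → ℝ} {C : ℝ} (hf : Nice f C) : IsProbDensity f := by
  refine ⟨hf.nonneg, ?_, hf.int_one⟩
  exact Measure.integrableOn_of_bounded (M := C) measure_Icc_lt_top.ne
    hf.meas.aestronglyMeasurable (Filter.Eventually.of_forall fun x => by simpa using hf.abs_le x)

lemma abs_int_le {U : ℝ → ℝ} {C : ℝ} (hU : Nice U C) :
    (∫ x in (0:ℝ)..1, |U x - 1|) ≤ 2 := by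
  have i1 : IntervalIntegrable (fun x => |U x - 1|) volume 0 1 := by
    apply II (C := C + 1) (hU.meas.sub measurable_const).abs
    intro x
    rw [abs_abs]
    simp only [Pi.sub_apply]
    exact abs_le.mpr ⟨by linarith [hU.nonneg x, hU.C_nonneg], by linarith [hU.bound x]⟩
  calc (∫ x in (0:ℝ)..1, |U x - 1|) ≤ ∫ x in (0:ℝ)..1, (U x + 1) := by
        apply intervalIntegral.integral_mono_on zero_le_one i1
          ((hU.intInt 0 1).add intervalIntegrable_const)
        intro x _
        exact abs_le.mpr ⟨by linarith [hU.nonneg x], by linarith [hU.nonneg x]⟩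
    _ = 2 := by
        rw [intervalIntegral.integral_add (hU.intInt 0 1) intervalIntegrable_const, hU.int_one]
        norm_num

lemma abs_int_ge {U : ℝ → ℝ} {C : ℝ} (hU : Nice U C) {s : ℝ} (hs0 : 0 ≤ s) (hs : s ≤ 1/2)
    (hsupp : ∀ x, s < x → x ≤ 1 → U x = 0) :
    (1/2 : ℝ) ≤ ∫ x in (0:ℝ)..1, |U x - 1| := by
  have iA : IntervalIntegrable (fun x => |U x - 1|) volume 0 1 := by
    apply II (C := C + 1) (hU.meas.sub measurable_const).abs
    intro x
    rw [abs_abs]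
    simp only [Pi.sub_apply]
    exact abs_le.mpr ⟨by linarith [hU.nonneg x, hU.C_nonneg], by linarith [hU.bound x]⟩
  have iB : IntervalIntegrable (fun x => |U x - 1|) volume 0 s := by
    apply II (C := C + 1) (hU.meas.sub measurable_const).abs
    intro x
    rw [abs_abs]
    simp only [Pi.sub_apply]
    exact abs_le.mpr ⟨by linarith [hU.nonneg x, hU.C_nonneg], by linarith [hU.bound x]⟩
  have iC : IntervalIntegrable (fun x => |U x - 1|) volume s 1 := by
    apply II (C := C + 1) (hU.meas.sub measurable_const).abs
    intro x
    rw [abs_abs]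
    simp only [Pi.sub_apply]
    exact abs_le.mpr ⟨by linarith [hU.nonneg x, hU.C_nonneg], by linarith [hU.bound x]⟩
  have hsplit : (∫ x in (0:ℝ)..1, |U x - 1|)
      = (∫ x in (0:ℝ)..s, |U x - 1|) + ∫ x in s..1, |U x - 1| :=
    (intervalIntegral.integral_add_adjacent_intervals iB iC).symm
  have h1 : 0 ≤ ∫ x in (0:ℝ)..s, |U x - 1| :=
    intervalIntegral.integral_nonneg hs0 (fun x _ => abs_nonneg _)
  have h2 : (∫ x in s..1, |U x - 1|) = 1 - s := by
    rw [intervalIntegral.integral_of_le (by linarith)]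
    rw [setIntegral_congr_fun measurableSet_Ioc (g := fun _ => (1:ℝ))
      (fun x hx => by rw [hsupp x hx.1 hx.2]; norm_num)]
    rw [setIntegral_const, measureReal_def, Real.volume_Ioc, smul_eq_mul,
      ENNReal.toReal_ofReal (by linarith)]
    ring
  rw [hsplit, h2]
  linarith

def TT (M : ℕ) : ℝ := ∏ m ∈ Finset.Icc 1 M, tp m

lemma TT_succ (M : ℕ) : TT (M + 1) = TT M * tp (M + 1) :=
  Finset.prod_Icc_succ_top (Nat.le_add_left 1 M) tp

lemma TT_lb (M : ℕ) : 1/2 + 1 / (2:ℝ) ^ (M + 2) ≤ TT M := by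
  induction M with
  | zero =>
    rw [TT]
    norm_num
  | succ M ih =>
    rw [TT_succ, tp]
    set A := (2:ℝ) ^ M with hA
    have hA1 : (1:ℝ) ≤ A := one_le_pow₀ (by norm_num)
    have e2 : (2:ℝ) ^ (M + 2) = 4 * A := by rw [hA]; ring
    have e3 : (2:ℝ) ^ (M + 1 + 2) = 8 * A := by rw [hA]; ring
    rw [e3]
    rw [e2] at ih
    have htp : (0:ℝ) ≤ 1 - 1 / (8 * A) := by
      rw [sub_nonneg, div_le_one (by linarith)]
      linarith
    have key := mul_le_mul_of_nonneg_right ih htp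
    have hApos : (0:ℝ) < A := by linarith
    have hB0 : (0:ℝ) < 1 / (8 * A) := by positivity
    have hB8 : 1 / (8 * A) ≤ 1 / 8 := by
      rw [div_le_div_iff₀ (by positivity) (by norm_num)]
      linarith
    have h24 : 1 / (4 * A) = 2 * (1 / (8 * A)) := by
      field_simp
      ring
    calc 1/2 + 1 / (8 * A) ≤ (1/2 + 1 / (4 * A)) * (1 - 1 / (8 * A)) := by
          rw [h24]
          nlinarith [hB0, hB8]
      _ ≤ TT M * (1 - 1 / (8 * A)) := key

def sM (M : ℕ) : ℝ := 1/2 - 1 / 2 ^ (M + 1)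

lemma sM_nonneg {M : ℕ} (hM : 1 ≤ M) : 0 ≤ sM M := by
  rw [sM, sub_nonneg]
  have h1 : (2:ℝ) ^ 2 ≤ 2 ^ (M + 1) := pow_le_pow_right₀ (by norm_num) (by omega)
  have h2 := one_div_le_one_div_of_le (by norm_num : (0:ℝ) < 2 ^ 2) h1
  norm_num at h2 ⊢
  linarith

lemma sM_le_half (M : ℕ) : sM M ≤ 1/2 := by
  rw [sM]
  have : (0:ℝ) < 1 / 2 ^ (M + 1) := by positivity
  linarith

lemma sM_step (M : ℕ) : sM M + eps (M + 1) = sM (M + 1) := by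
  rw [sM, sM, eps]
  have h : (2:ℝ) ^ (M + 1 + 1) = 2 * 2 ^ (M + 1) := by ring
  rw [h]
  have hp : (0:ℝ) < 2 ^ (M + 1) := by positivity
  field_simp
  ring

def G (m : ℕ) : ℝ → ℝ := fun x => 1 + tp m * (phi m x - 1)

lemma nice_G (m : ℕ) : Nice (G m) (1 + 2 ^ (m + 1)) :=
  nice_affine (nice_phi m) (tp_nonneg m) (tp_lt_one m).le

/-- There is a sequence of probability densities `g m` on `[0,1]` such that (1) for each
fixed `i` the `M`-fold circular self-convolutions of `g i` converge in `L¹([0,1])` to the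
constant `1`, but (2) the convolutions `h M = g 1 ∗ g 2 ∗ ⋯ ∗ g M` do NOT converge in
`L¹([0,1])` to the constant `1`. -/
theorem exists_nonIdentical_counterexample :
    ∃ g : ℕ → ℝ → ℝ,
      (∀ m, 1 ≤ m → IsProbDensity (g m)) ∧
      (∀ i, 1 ≤ i → ∀ h : ℕ → ℝ → ℝ, h 1 = g i →
        (∀ M, 1 ≤ M → h (M + 1) = circConv (h M) (g i)) →
        Tendsto (fun M => ∫ x in (0:ℝ)..1, |h M x - 1|) atTop (nhds 0)) ∧
      (∀ h : ℕ → ℝ → ℝ, h 1 = g 1 →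
        (∀ M, 1 ≤ M → h (M + 1) = circConv (h M) (g (M + 1))) →
        ¬ Tendsto (fun M => ∫ x in (0:ℝ)..1, |h M x - 1|) atTop (nhds 0)) := by
  refine ⟨G, fun m _ => nice_isProbDensity (nice_G m), ?_, ?_⟩
  · -- part 2 : self-convolutions converge
    intro i _ h h1 hrec
    have inv : ∀ M, 1 ≤ M → ∃ U C, Nice U C ∧
        h M = fun x => 1 + tp i ^ M * (U x - 1) := by
      intro M hM
      induction M, hM using Nat.le_induction with
      | base =>
        exact ⟨phi i, 2 ^ (i + 1), nice_phi i, by rw [h1]; simp only [pow_one]; rfl⟩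
      | succ M hM ih =>
        obtain ⟨U, C, hU, hform⟩ := ih
        refine ⟨circConv U (phi i), C * 2 ^ (i + 1), hU.conv (nice_phi i), ?_⟩
        rw [hrec M hM, hform,
          show G i = fun x => 1 + tp i * (phi i x - 1) from rfl,
          conv_affine hU (nice_phi i)]
        funext x
        rw [pow_succ]
    apply squeeze_zero' (g := fun M => 2 * tp i ^ M)
    · exact Filter.Eventually.of_forall fun M =>
        intervalIntegral.integral_nonneg zero_le_one fun x _ => abs_nonneg _
    · rw [eventually_atTop]
      refine ⟨1, fun M hM => ?_⟩
      obtain ⟨U, C, hU, hform⟩ := inv M hM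
      have e : ∀ x ∈ Set.uIcc (0:ℝ) 1, |h M x - 1| = tp i ^ M * |U x - 1| := by
        intro x _
        rw [hform]
        show |1 + tp i ^ M * (U x - 1) - 1| = _
        rw [add_sub_cancel_left, abs_mul, abs_pow, abs_of_nonneg (tp_nonneg i)]
      calc (∫ x in (0:ℝ)..1, |h M x - 1|)
          = ∫ x in (0:ℝ)..1, tp i ^ M * |U x - 1| := intervalIntegral.integral_congr e
        _ = tp i ^ M * ∫ x in (0:ℝ)..1, |U x - 1| := intervalIntegral.integral_const_mul _ _
        _ ≤ tp i ^ M * 2 :=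
            mul_le_mul_of_nonneg_left (abs_int_le hU) (pow_nonneg (tp_nonneg i) M)
        _ = 2 * tp i ^ M := mul_comm _ _
    · simpa using
        (tendsto_pow_atTop_nhds_zero_of_lt_one (tp_nonneg i) (tp_lt_one i)).const_mul (2:ℝ)
  · -- part 3 : the mixed convolutions do not converge
    intro h h1 hrec hT
    have inv : ∀ M, 1 ≤ M → ∃ U C, Nice U C ∧
        (∀ x, sM M < x → x ≤ 1 → U x = 0) ∧
        h M = fun x => 1 + TT M * (U x - 1) := by
      intro M hM
      induction M, hM using Nat.le_induction with
      | base =>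
        refine ⟨phi 1, 2 ^ 2, nice_phi 1, ?_, ?_⟩
        · intro x hx1 _
          apply phi_supp
          simp only [Set.mem_Ioc, not_and, not_le]
          intro _
          have : sM 1 = eps 1 := by norm_num [sM, eps]
          linarith [this ▸ hx1]
        · rw [h1]
          have hTT1 : TT 1 = tp 1 := by rw [TT]; simp
          simp only [hTT1]
          rfl
      | succ M hM ih =>
        obtain ⟨U, C, hU, hsupp, hform⟩ := ih
        refine ⟨circConv U (phi (M + 1)), C * 2 ^ (M + 2), hU.conv (nice_phi (M + 1)), ?_, ?_⟩
        · intro x hx1 hx2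
          exact conv_support (eps_pos (M + 1)).le hsupp (phi_supp (M + 1)) x
            (by rw [sM_step]; exact hx1) hx2
        · rw [hrec M hM, hform,
            show G (M + 1) = fun x => 1 + tp (M + 1) * (phi (M + 1) x - 1) from rfl,
            conv_affine hU (nice_phi (M + 1))]
          funext x
          rw [TT_succ]
    have hlow : ∀ M, 1 ≤ M → (1/4 : ℝ) < ∫ x in (0:ℝ)..1, |h M x - 1| := by
      intro M hM
      obtain ⟨U, C, hU, hsupp, hform⟩ := inv M hM
      have hTTlb := TT_lb M
      have hTTpos : (0:ℝ) < TT M := by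
        have : (0:ℝ) < 1 / 2 ^ (M + 2) := by positivity
        linarith
      have e : ∀ x ∈ Set.uIcc (0:ℝ) 1, |h M x - 1| = TT M * |U x - 1| := by
        intro x _
        rw [hform]
        show |1 + TT M * (U x - 1) - 1| = _
        rw [add_sub_cancel_left, abs_mul, abs_of_nonneg hTTpos.le]
      have hge := abs_int_ge hU (sM_nonneg hM) (sM_le_half M) hsupp
      have hpow : (0:ℝ) < 1 / 2 ^ (M + 2) := by positivity
      calc (1/4 : ℝ) < TT M * (1/2) := by nlinarith
        _ ≤ TT M * ∫ x in (0:ℝ)..1, |U x - 1| :=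
            mul_le_mul_of_nonneg_left hge hTTpos.le
        _ = ∫ x in (0:ℝ)..1, |h M x - 1| := by
            rw [intervalIntegral.integral_congr e, intervalIntegral.integral_const_mul]
    have h4 : ∀ᶠ M in atTop, (∫ x in (0:ℝ)..1, |h M x - 1|) < 1/4 :=
      hT (Iio_mem_nhds (by norm_num))
    rw [eventually_atTop] at h4
    obtain ⟨N, hN⟩ := h4
    have h5 := hN (max N 1) (le_max_left _ _)
    have h6 := hlow (max N 1) (le_max_right _ _)
    linarith

end
end

section
/- Fix α > 1 and let X be a random variable with density f_α(x) = α/(x (log x)^{α+1}) for x ≥ e and f_α(x) = 0 otherwise. Then for every s ∈ [1, e), the probability that the mantissa base e of X is at most s equals Σ_{m=1}^{∞} ( 1/m^α − 1/(log(s·e^m))^α ), i.e. P(M_e(X) ≤ s) = Σ_{m=1}^{∞} (m^{−α} − (log s + m)^{−α}), and both series converge. -/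
open MeasureTheory

lemma mantissa_aux_deriv (α : ℝ) (x : ℝ) (hx0 : 0 < x) (hlx : 0 < Real.log x) :
    HasDerivAt (fun y => -(Real.log y) ^ (-α)) (α / (x * Real.log x ^ (α + 1))) x := by
  have h1 : HasDerivAt Real.log x⁻¹ x := Real.hasDerivAt_log hx0.ne'
  have h2 : HasDerivAt (fun y : ℝ => y ^ (-α)) (-α * Real.log x ^ (-α - 1)) (Real.log x) :=
    Real.hasDerivAt_rpow_const (Or.inl hlx.ne')
  have h3 := (h2.comp x h1).neg
  refine h3.congr_deriv ?_
  rw [show -α - 1 = -(α + 1) by ring, Real.rpow_neg hlx.le]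
  rw [div_eq_mul_inv, mul_inv]
  ring

lemma mantissa_aux_measure (α : ℝ) (hα : 1 < α) (s : ℝ) (hs1 : 1 ≤ s) (m : ℕ) :
    (volume.withDensity fun x =>
        ENNReal.ofReal (if Real.exp 1 ≤ x then α / (x * Real.log x ^ (α + 1)) else 0))
      (Set.Icc (Real.exp ((m:ℝ)+1)) (s * Real.exp ((m:ℝ)+1))) =
    ENNReal.ofReal (((m : ℝ) + 1) ^ (-α) - (Real.log s + ((m : ℝ) + 1)) ^ (-α)) := by
  set a := Real.exp ((m:ℝ)+1) with ha
  set b := s * Real.exp ((m:ℝ)+1) with hb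
  have hs0 : (0:ℝ) < s := lt_of_lt_of_le one_pos hs1
  have ha0 : 0 < a := Real.exp_pos _
  have hab : a ≤ b := le_mul_of_one_le_left ha0.le hs1
  have hea : Real.exp 1 ≤ a := Real.exp_le_exp.mpr (by linarith [Nat.cast_nonneg (α := ℝ) m])
  have hkey : ∀ x ∈ Set.Icc a b, Real.exp 1 ≤ x ∧ 0 < x ∧ 0 < Real.log x := by
    intro x hx
    have hx1 : Real.exp 1 ≤ x := le_trans hea hx.1
    have hx0 : 0 < x := lt_of_lt_of_le (Real.exp_pos 1) hx1
    refine ⟨hx1, hx0, ?_⟩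
    have : (1:ℝ) ≤ Real.log x := (Real.le_log_iff_exp_le hx0).mpr hx1
    linarith
  have hcont : ContinuousOn (fun x => α / (x * Real.log x ^ (α + 1))) (Set.Icc a b) := by
    apply ContinuousOn.div continuousOn_const
    · exact continuousOn_id.mul ((Real.continuousOn_log.mono
        (fun x hx => (hkey x hx).2.1.ne')).rpow_const
        (fun x hx => Or.inl (hkey x hx).2.2.ne'))
    · intro x hx
      exact (mul_pos (hkey x hx).2.1 (Real.rpow_pos_of_pos (hkey x hx).2.2 _)).ne'
  rw [withDensity_apply _ measurableSet_Icc]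
  rw [setLIntegral_congr_fun measurableSet_Icc
    (fun x hx => by rw [if_pos (hkey x hx).1])]
  rw [← ofReal_integral_eq_lintegral_ofReal (hcont.integrableOn_Icc)
    (ae_restrict_of_forall_mem measurableSet_Icc (fun x hx =>
      le_of_lt (div_pos (by linarith) (mul_pos (hkey x hx).2.1
        (Real.rpow_pos_of_pos (hkey x hx).2.2 _)))))]
  congr 1
  rw [MeasureTheory.integral_Icc_eq_integral_Ioc, ← intervalIntegral.integral_of_le hab]
  rw [intervalIntegral.integral_eq_sub_of_hasDerivAt
    (f := fun y => -(Real.log y) ^ (-α))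
    (fun x hx => mantissa_aux_deriv α x (hkey x (by rwa [Set.uIcc_of_le hab] at hx)).2.1
      (hkey x (by rwa [Set.uIcc_of_le hab] at hx)).2.2)
    ((hcont.mono (by rw [Set.uIcc_of_le hab])).intervalIntegrable)]
  have hla : Real.log a = (m:ℝ) + 1 := Real.log_exp _
  have hlb : Real.log b = Real.log s + ((m:ℝ)+1) := by
    rw [hb, Real.log_mul hs0.ne' (Real.exp_ne_zero _), Real.log_exp]
  rw [hla, hlb]; ring

lemma mantissa_aux_set (s : ℝ) (hs1 : 1 ≤ s) (hse : s < Real.exp 1) :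
    {x : ℝ | Real.exp (Int.fract (Real.log x)) ≤ s} ∩ Set.Ici (Real.exp 1) =
      ⋃ m : ℕ, Set.Icc (Real.exp ((m:ℝ)+1)) (s * Real.exp ((m:ℝ)+1)) := by
  have hs0 : (0:ℝ) < s := lt_of_lt_of_le one_pos hs1
  have hls0 : 0 ≤ Real.log s := Real.log_nonneg hs1
  have hls1 : Real.log s < 1 := by
    have := Real.log_lt_log hs0 hse
    rwa [Real.log_exp] at this
  ext x
  simp only [Set.mem_inter_iff, Set.mem_setOf_eq, Set.mem_Ici, Set.mem_iUnion, Set.mem_Icc]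
  constructor
  · rintro ⟨hfr, hex⟩
    have hx0 : 0 < x := lt_of_lt_of_le (Real.exp_pos 1) hex
    have hlx : 1 ≤ Real.log x := (Real.le_log_iff_exp_le hx0).mpr hex
    have hk1 : 1 ≤ ⌊Real.log x⌋ := by
      exact_mod_cast Int.le_floor.mpr (by exact_mod_cast hlx)
    have hcast : ((⌊Real.log x⌋ - 1).toNat : ℝ) + 1 = (⌊Real.log x⌋ : ℝ) := by
      have h : ((⌊Real.log x⌋ - 1).toNat : ℝ) = (⌊Real.log x⌋ : ℝ) - 1 := by
        exact_mod_cast Int.toNat_of_nonneg (show (0:ℤ) ≤ ⌊Real.log x⌋ - 1 by omega)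
      rw [h]; ring
    refine ⟨(⌊Real.log x⌋ - 1).toNat, ?_, ?_⟩
    · rw [hcast]
      calc Real.exp (⌊Real.log x⌋ : ℝ) ≤ Real.exp (Real.log x) :=
            Real.exp_le_exp.mpr (Int.floor_le _)
        _ = x := Real.exp_log hx0
    · rw [hcast]
      calc x = Real.exp (Real.log x) := (Real.exp_log hx0).symm
        _ = Real.exp (Int.fract (Real.log x)) * Real.exp (⌊Real.log x⌋ : ℝ) := by
            rw [← Real.exp_add]; congr 1
            rw [Int.fract]; ring
        _ ≤ s * Real.exp (⌊Real.log x⌋ : ℝ) :=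
            mul_le_mul_of_nonneg_right hfr (Real.exp_pos _).le
  · rintro ⟨m, h1, h2⟩
    have hx0 : 0 < x := lt_of_lt_of_le (Real.exp_pos _) h1
    have hge : Real.exp 1 ≤ x :=
      le_trans (Real.exp_le_exp.mpr (by linarith [Nat.cast_nonneg (α := ℝ) m])) h1
    have hlow : ((m:ℝ)+1) ≤ Real.log x := (Real.le_log_iff_exp_le hx0).mpr h1
    have hhigh : Real.log x ≤ Real.log s + ((m:ℝ)+1) := by
      have hx2 : x ≤ Real.exp (Real.log s + ((m:ℝ)+1)) := by
        rw [Real.exp_add, Real.exp_log hs0]; exact h2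
      have := Real.log_le_log hx0 hx2
      rwa [Real.log_exp] at this
    have hfloor : ⌊Real.log x⌋ = (m:ℤ) + 1 := by
      rw [Int.floor_eq_iff]
      constructor
      · push_cast; exact hlow
      · push_cast; linarith
    have hfract : Int.fract (Real.log x) ≤ Real.log s := by
      rw [Int.fract, hfloor]; push_cast; linarith
    refine ⟨?_, hge⟩
    calc Real.exp (Int.fract (Real.log x)) ≤ Real.exp (Real.log s) :=
          Real.exp_le_exp.mpr hfract
      _ = s := Real.exp_log hs0

/-- For `α > 1` and a random variable `X` with density `f_α(x) = α/(x (log x)^{α+1})`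
for `x ≥ e` (and `0` otherwise), for every `s ∈ [1, e)` the probability that the mantissa
base `e` of `X` (namely `e^{frac(log X)}`) is at most `s` equals
`Σ_{m=1}^{∞} (m^{−α} − (log s + m)^{−α})`, and both series
`Σ m^{−α}` and `Σ (log s + m)^{−α}` converge. -/
theorem mantissa_cdf_pareto_log {Ω : Type*} [MeasureSpace Ω]
    [IsProbabilityMeasure (volume : Measure Ω)]
    (α : ℝ) (hα : 1 < α) (X : Ω → ℝ) (hX : Measurable X)
    (hdens : Measure.map X (volume : Measure Ω) =
      volume.withDensity fun x =>
        ENNReal.ofReal (if Real.exp 1 ≤ x then α / (x * Real.log x ^ (α + 1)) else 0)) :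
    ∀ s ∈ Set.Ico (1:ℝ) (Real.exp 1),
      ((volume : Measure Ω) {ω | Real.exp (Int.fract (Real.log (X ω))) ≤ s}).toReal =
          (∑' m : ℕ, (((m : ℝ) + 1) ^ (-α) - (Real.log s + ((m : ℝ) + 1)) ^ (-α))) ∧
        Summable (fun m : ℕ => ((m : ℝ) + 1) ^ (-α)) ∧
        Summable (fun m : ℕ => (Real.log s + ((m : ℝ) + 1)) ^ (-α)) := by
  intro s hs
  obtain ⟨hs1, hse⟩ := hs
  have hs0 : (0:ℝ) < s := lt_of_lt_of_le one_pos hs1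
  have hls0 : 0 ≤ Real.log s := Real.log_nonneg hs1
  -- positivity facts
  have hpos : ∀ m : ℕ, (0:ℝ) < (m:ℝ) + 1 := fun m => by positivity
  have hterm : ∀ m : ℕ, (Real.log s + ((m:ℝ)+1)) ^ (-α) ≤ ((m:ℝ)+1) ^ (-α) := by
    intro m
    rw [Real.rpow_neg (hpos m).le, Real.rpow_neg (by linarith [hpos m])]
    exact inv_anti₀ (Real.rpow_pos_of_pos (hpos m) α)
      (Real.rpow_le_rpow (hpos m).le (by linarith) (by linarith))
  have hnneg : ∀ m : ℕ, 0 ≤ ((m:ℝ)+1) ^ (-α) - (Real.log s + ((m:ℝ)+1)) ^ (-α) :=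
    fun m => sub_nonneg.mpr (hterm m)
  -- summability
  have hsum1 : Summable (fun m : ℕ => ((m : ℝ) + 1) ^ (-α)) := by
    have h := Real.summable_nat_rpow.mpr (show -α < -1 by linarith)
    have h2 := h.comp_injective (add_left_injective 1)
    refine h2.congr fun n => ?_
    simp only [Function.comp]
    push_cast
    ring_nf
  have hsum2 : Summable (fun m : ℕ => (Real.log s + ((m : ℝ) + 1)) ^ (-α)) :=
    Summable.of_nonneg_of_le (fun m => Real.rpow_nonneg (by linarith [hpos m]) _) hterm hsum1
  refine ⟨?_, hsum1, hsum2⟩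
  -- measurability of the mantissa event
  set S : Set ℝ := {x : ℝ | Real.exp (Int.fract (Real.log x)) ≤ s} with hSdef
  have hS : MeasurableSet S :=
    measurableSet_le (Real.measurable_exp.comp (measurable_fract.comp Real.measurable_log))
      measurable_const
  set μ : Measure ℝ := volume.withDensity fun x =>
    ENNReal.ofReal (if Real.exp 1 ≤ x then α / (x * Real.log x ^ (α + 1)) else 0) with hμ
  have hev : (volume : Measure Ω) {ω | Real.exp (Int.fract (Real.log (X ω))) ≤ s} = μ S := by
    have : {ω | Real.exp (Int.fract (Real.log (X ω))) ≤ s} = X ⁻¹' S := rfl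
    rw [this, ← Measure.map_apply hX hS, hdens]
  -- the part below e has measure zero
  have h0 : μ (S \ Set.Ici (Real.exp 1)) = 0 := by
    rw [hμ, withDensity_apply _ (hS.diff measurableSet_Ici)]
    have heq : ∀ᵐ x ∂(volume.restrict (S \ Set.Ici (Real.exp 1))),
        ENNReal.ofReal (if Real.exp 1 ≤ x then α / (x * Real.log x ^ (α + 1)) else 0)
          = (0 : ENNReal) := by
      refine ae_restrict_of_forall_mem (hS.diff measurableSet_Ici) fun x hx => ?_
      rw [if_neg (show ¬ Real.exp 1 ≤ x from fun h => hx.2 h), ENNReal.ofReal_zero]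
    rw [lintegral_congr_ae heq, lintegral_zero]
  have hsplit : μ S = μ (S ∩ Set.Ici (Real.exp 1)) := by
    have h := measure_inter_add_diff (μ := μ) S (measurableSet_Ici (a := Real.exp 1))
    rw [h0, add_zero] at h
    exact h.symm
  -- disjointness of the intervals
  have hkeydisj : ∀ m n : ℕ, m < n →
      Disjoint (Set.Icc (Real.exp ((m:ℝ)+1)) (s * Real.exp ((m:ℝ)+1)))
        (Set.Icc (Real.exp ((n:ℝ)+1)) (s * Real.exp ((n:ℝ)+1))) := by
    intro m n hmn
    rw [Set.disjoint_left]
    rintro x ⟨_, hx2⟩ ⟨hx3, _⟩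
    have h1 : s * Real.exp ((m:ℝ)+1) < Real.exp ((n:ℝ)+1) := by
      calc s * Real.exp ((m:ℝ)+1) < Real.exp 1 * Real.exp ((m:ℝ)+1) :=
            mul_lt_mul_of_pos_right hse (Real.exp_pos _)
        _ = Real.exp ((m:ℝ)+2) := by rw [← Real.exp_add]; ring_nf
        _ ≤ Real.exp ((n:ℝ)+1) := Real.exp_le_exp.mpr (by
            have : (m:ℝ) + 1 ≤ (n:ℝ) := by exact_mod_cast Nat.succ_le_of_lt hmn
            linarith)
    linarith
  have hdisj : Pairwise (Function.onFun Disjoint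
      (fun m : ℕ => Set.Icc (Real.exp ((m:ℝ)+1)) (s * Real.exp ((m:ℝ)+1)))) := by
    intro m n hmn
    rcases hmn.lt_or_gt with h | h
    · exact hkeydisj m n h
    · exact (hkeydisj n m h).symm
  -- compute
  have hcomp : μ S = ∑' m : ℕ,
      ENNReal.ofReal (((m : ℝ) + 1) ^ (-α) - (Real.log s + ((m : ℝ) + 1)) ^ (-α)) := by
    rw [hsplit, mantissa_aux_set s hs1 hse,
      measure_iUnion hdisj (fun m => measurableSet_Icc)]
    exact tsum_congr fun m => mantissa_aux_measure α hα s hs1 m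
  rw [hev, hcomp, ENNReal.tsum_toReal_eq (fun m => ENNReal.ofReal_ne_top)]
  exact tsum_congr fun m => ENNReal.toReal_ofReal (hnneg m)
end

section
/- Fix α > 1. The cumulative distribution function F_{e,α}(s) = Σ_{m=1}^{∞} (m^{−α} − (log s + m)^{−α}) of the mantissa base e of a random variable with density f_α(x) = α/(x (log x)^{α+1}) (x ≥ e) is differentiable on [1, e), and its derivative — the density of the mantissa — is given by the termwise-differentiated series f_{e,α}(s) = α Σ_{m=1}^{∞} 1/(s·(log(s·e^m))^{α+1}) = (α/s) Σ_{m=1}^{∞} (log s + m)^{−(α+1)}, which converges and is uniformly bounded for s ∈ [1, e). -/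
open MeasureTheory

/-- For `α > 1`, the cumulative distribution function
`F_{e,α}(s) = Σ_{m=1}^{∞} (m^{−α} − (log s + m)^{−α})` of the mantissa base `e` is
differentiable on `[1, e)`, with derivative (the density of the mantissa) given by the
termwise-differentiated series `f_{e,α}(s) = (α/s) Σ_{m=1}^{∞} (log s + m)^{−(α+1)}`,
which converges and is uniformly bounded for `s ∈ [1, e)`. -/
theorem mantissa_density_pareto_log (α : ℝ) (hα : 1 < α) (F : ℝ → ℝ)
    (hF : ∀ s, F s = ∑' m : ℕ, (((m : ℝ) + 1) ^ (-α) - (Real.log s + ((m : ℝ) + 1)) ^ (-α))) :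
    (∀ s ∈ Set.Ico (1:ℝ) (Real.exp 1),
      Summable (fun m : ℕ => (Real.log s + ((m : ℝ) + 1)) ^ (-(α + 1))) ∧
      HasDerivWithinAt F
        ((α / s) * ∑' m : ℕ, (Real.log s + ((m : ℝ) + 1)) ^ (-(α + 1)))
        (Set.Ico (1:ℝ) (Real.exp 1)) s) ∧
    ∃ C : ℝ, ∀ s ∈ Set.Ico (1:ℝ) (Real.exp 1),
      (α / s) * (∑' m : ℕ, (Real.log s + ((m : ℝ) + 1)) ^ (-(α + 1))) ≤ C := by
  have hFfun : F = fun y => ∑' m : ℕ,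
      (((m : ℝ) + 1) ^ (-α) - (Real.log y + ((m : ℝ) + 1)) ^ (-α)) := funext hF
  -- basic summability
  have h1 : Summable (fun n : ℕ => ((n : ℝ)) ^ (-(α + 1))) := by
    rw [Real.summable_nat_rpow]; linarith
  have hsum1 : Summable (fun n : ℕ => ((n : ℝ) + 1) ^ (-(α + 1))) := by
    have := (summable_nat_add_iff 1).2 h1
    simpa using this
  -- the open set
  set S : Set ℝ := Set.Ioo (Real.exp (-(1/2 : ℝ))) (Real.exp 1) with hSdef
  have hSopen : IsOpen S := isOpen_Ioo
  have hSconn : IsPreconnected S := isPreconnected_Ioo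
  have hexp_lt_one : Real.exp (-(1/2 : ℝ)) < 1 := by
    rw [Real.exp_lt_one_iff]; norm_num
  have hsub : Set.Ico (1:ℝ) (Real.exp 1) ⊆ S := by
    rintro s ⟨h1s, h2s⟩
    exact ⟨lt_of_lt_of_le hexp_lt_one h1s, h2s⟩
  have h1S : (1:ℝ) ∈ S := ⟨hexp_lt_one, by simpa using Real.exp_lt_exp.2 (by norm_num : (0:ℝ) < 1)⟩
  -- positivity on S
  have hpos : ∀ (m : ℕ), ∀ y ∈ S, ((m : ℝ) + 1) / 2 ≤ Real.log y + ((m : ℝ) + 1) ∧ 0 < y := by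
    intro m y hy
    have hy0 : (0:ℝ) < y := lt_trans (Real.exp_pos _) hy.1
    have hlog : -(1/2 : ℝ) < Real.log y := (Real.lt_log_iff_exp_lt hy0).2 hy.1
    constructor
    · have : (0:ℝ) ≤ (m:ℝ) := Nat.cast_nonneg m
      nlinarith
    · exact hy0
  -- summable bound
  have hu : Summable (fun n : ℕ => (2 * α) * (2 ^ (α + 1) * ((n : ℝ) + 1) ^ (-(α + 1)))) :=
    (hsum1.mul_left _).mul_left _
  -- derivative of each term on S
  have hderiv : ∀ (m : ℕ), ∀ y ∈ S,
      HasDerivAt (fun z => (((m : ℝ) + 1) ^ (-α) - (Real.log z + ((m : ℝ) + 1)) ^ (-α)))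
        ((α / y) * (Real.log y + ((m : ℝ) + 1)) ^ (-(α + 1))) y := by
    intro m y hy
    obtain ⟨hge, hy0⟩ := hpos m y hy
    have hbpos : 0 < Real.log y + ((m : ℝ) + 1) := lt_of_lt_of_le (by positivity) hge
    have hlog : HasDerivAt (fun z => Real.log z + ((m : ℝ) + 1)) y⁻¹ y :=
      (Real.hasDerivAt_log (ne_of_gt hy0)).add_const _
    have hr : HasDerivAt (fun t : ℝ => t ^ (-α))
        ((-α) * (Real.log y + ((m : ℝ) + 1)) ^ (-α - 1)) (Real.log y + ((m : ℝ) + 1)) :=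
      Real.hasDerivAt_rpow_const (Or.inl (ne_of_gt hbpos))
    have := (hr.comp y hlog).const_sub (((m : ℝ) + 1) ^ (-α))
    refine this.congr_deriv ?_
    symm
    rw [show -(α + 1) = -α - 1 by ring]
    field_simp
  -- bound on derivatives
  have hbound : ∀ (m : ℕ), ∀ y ∈ S,
      ‖(α / y) * (Real.log y + ((m : ℝ) + 1)) ^ (-(α + 1))‖ ≤
        (2 * α) * (2 ^ (α + 1) * ((m : ℝ) + 1) ^ (-(α + 1))) := by
    intro m y hy
    obtain ⟨hge, hy0⟩ := hpos m y hy
    have hhalf : (0:ℝ) < ((m : ℝ) + 1) / 2 := by positivity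
    have hbpos : 0 < Real.log y + ((m : ℝ) + 1) := lt_of_lt_of_le hhalf hge
    have hαpos : (0:ℝ) < α := lt_trans one_pos hα
    have hy_half : (1/2 : ℝ) ≤ y := by
      have := Real.add_one_le_exp (-(1/2 : ℝ))
      linarith [hy.1.le]
    have h1 : α / y ≤ 2 * α := by
      rw [div_le_iff₀ hy0]; nlinarith
    have h2 : (Real.log y + ((m : ℝ) + 1)) ^ (-(α + 1)) ≤ (((m : ℝ) + 1) / 2) ^ (-(α + 1)) :=
      Real.rpow_le_rpow_of_nonpos hhalf hge (by linarith)
    have h3 : (((m : ℝ) + 1) / 2) ^ (-(α + 1)) = 2 ^ (α + 1) * ((m : ℝ) + 1) ^ (-(α + 1)) := by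
      rw [Real.div_rpow (by positivity) (by norm_num),
        Real.rpow_neg (by norm_num : (0:ℝ) ≤ 2), div_eq_mul_inv, inv_inv, mul_comm]
    rw [norm_mul, Real.norm_eq_abs, Real.norm_eq_abs,
      abs_of_pos (div_pos hαpos hy0), abs_of_pos (Real.rpow_pos_of_pos hbpos _)]
    calc α / y * (Real.log y + ((m : ℝ) + 1)) ^ (-(α + 1))
        ≤ (2 * α) * ((((m : ℝ) + 1) / 2) ^ (-(α + 1))) := by
          apply mul_le_mul h1 h2 (le_of_lt (Real.rpow_pos_of_pos hbpos _)) (by positivity)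
      _ = (2 * α) * (2 ^ (α + 1) * ((m : ℝ) + 1) ^ (-(α + 1))) := by rw [h3]
  -- summability at base point 1
  have hg0 : Summable (fun m : ℕ =>
      (((m : ℝ) + 1) ^ (-α) - (Real.log 1 + ((m : ℝ) + 1)) ^ (-α))) := by
    simpa [Real.log_one] using summable_zero
  constructor
  · intro s hs
    have hslog : 0 ≤ Real.log s := Real.log_nonneg hs.1
    constructor
    · apply Summable.of_nonneg_of_le (fun m => Real.rpow_nonneg (by positivity) _)
        (fun m => ?_) hsum1
      exact Real.rpow_le_rpow_of_nonpos (by positivity) (le_add_of_nonneg_left hslog) (by linarith)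
    · have hd : HasDerivAt F
          (∑' m : ℕ, (α / s) * (Real.log s + ((m : ℝ) + 1)) ^ (-(α + 1))) s := by
        rw [hFfun]
        exact hasDerivAt_tsum_of_isPreconnected hu hSopen hSconn hderiv hbound h1S hg0 (hsub hs)
      rw [tsum_mul_left] at hd
      exact hd.hasDerivWithinAt
  · refine ⟨α * ∑' m : ℕ, ((m : ℝ) + 1) ^ (-(α + 1)), fun s hs => ?_⟩
    have hs1 : (1:ℝ) ≤ s := hs.1
    have hs0 : (0:ℝ) < s := lt_of_lt_of_le one_pos hs1
    have hslog : 0 ≤ Real.log s := Real.log_nonneg hs1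
    have hαpos : (0:ℝ) < α := lt_trans one_pos hα
    have hsumS : Summable (fun m : ℕ => (Real.log s + ((m : ℝ) + 1)) ^ (-(α + 1))) := by
      apply Summable.of_nonneg_of_le (fun m => Real.rpow_nonneg (by positivity) _)
        (fun m => ?_) hsum1
      exact Real.rpow_le_rpow_of_nonpos (by positivity) (le_add_of_nonneg_left hslog) (by linarith)
    have hts : (∑' m : ℕ, (Real.log s + ((m : ℝ) + 1)) ^ (-(α + 1))) ≤
        ∑' m : ℕ, ((m : ℝ) + 1) ^ (-(α + 1)) := by
      apply Summable.tsum_le_tsum (fun m => ?_) hsumS hsum1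
      exact Real.rpow_le_rpow_of_nonpos (by positivity) (le_add_of_nonneg_left hslog) (by linarith)
    have hdiv : α / s ≤ α := by
      rw [div_le_iff₀ hs0]; nlinarith
    have htnn : 0 ≤ ∑' m : ℕ, (Real.log s + ((m : ℝ) + 1)) ^ (-(α + 1)) :=
      tsum_nonneg (fun m => Real.rpow_nonneg (by positivity) _)
    calc (α / s) * (∑' m : ℕ, (Real.log s + ((m : ℝ) + 1)) ^ (-(α + 1)))
        ≤ α * (∑' m : ℕ, (Real.log s + ((m : ℝ) + 1)) ^ (-(α + 1))) := by
          apply mul_le_mul_of_nonneg_right hdiv htnn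
      _ ≤ α * ∑' m : ℕ, ((m : ℝ) + 1) ^ (-(α + 1)) :=
          mul_le_mul_of_nonneg_left hts hαpos.le
end
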